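/- Let T be a probability distribution on X × Y with marginal T_X, and fix ρ > 0, ε > 0, p ≥ 1 (all relevant integrands measurable and integrable). Then for every pair of score functions f, f* : X → ℝ^C: R^{rob}_T(f) ≤ disp^{rob,(ρ)}_{T_X}(f*, f) + R^{(ρ)}_T(f*). -/
import Mathlib


noncomputable section
open MeasureTheory Finset Set

namespace RobustUDA

/-- The input space: `ℝ^d`. -/
abbrev Inp (d : ℕ) := Fin d → ℝ

variable {d C : ℕ}

/-- `ℓ_p`-norm of a vector in `ℝ^d`. -/
def pnorm (p : ℝ) (v : Inp d) : ℝ := (∑ i, |v i| ^ p) ^ (1 / p)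

/-- The `ε`-ball centered at `x` in the `ℓ_p`-norm. -/
def ball (p ε : ℝ) (x : Inp d) : Set (Inp d) := {x' | pnorm p (fun i => x i - x' i) ≤ ε}

open Classical in
/-- Indicator function of a proposition, real valued. -/
def ind (P : Prop) : ℝ := if P then 1 else 0

/-- The ramp function `Φ_ρ`. -/
def ramp (ρ t : ℝ) : ℝ := if t ≤ 0 then 1 else if t ≤ ρ then 1 - t / ρ else 0

/-- The margin `M_f(x,y) = f_y(x) - max_{y' ≠ y} f_{y'}(x)`. -/
def margin (f : Inp d → Fin C → ℝ) (x : Inp d) (y : Fin C) : ℝ :=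
  f x y - sSup (f x '' {y' | y' ≠ y})

/-- Standard (0-1) risk of a classifier `hf` on a distribution `D` on `X × Y`. -/
def stdRisk (D : Measure (Inp d × Fin C)) (hf : Inp d → Fin C) : ℝ :=
  ∫ z, ind (z.2 ≠ hf z.1) ∂D

/-- Robust (0-1) risk of a classifier `hf`. -/
def robustRisk (p ε : ℝ) (D : Measure (Inp d × Fin C)) (hf : Inp d → Fin C) : ℝ :=
  ∫ z, sSup ((fun x' => ind (z.2 ≠ hf x')) '' ball p ε z.1) ∂D

/-- Margin risk `R^{(ρ)}_D(f)`. -/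
def marginRisk (ρ : ℝ) (D : Measure (Inp d × Fin C)) (f : Inp d → Fin C → ℝ) : ℝ :=
  ∫ z, ramp ρ (margin f z.1 z.2) ∂D

/-- Robust margin risk `R^{rob,(ρ)}_D(f)`. -/
def robustMarginRisk (p ε ρ : ℝ) (D : Measure (Inp d × Fin C)) (f : Inp d → Fin C → ℝ) : ℝ :=
  ∫ z, sSup ((fun x' => ramp ρ (margin f x' z.2)) '' ball p ε z.1) ∂D

/-- Margin disparity `disp^{(ρ)}_{D_X}(f', f)`, where `hf'` is the classifier induced by `f'`. -/
def marginDisp (ρ : ℝ) (DX : Measure (Inp d)) (hf' : Inp d → Fin C)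
    (f : Inp d → Fin C → ℝ) : ℝ :=
  ∫ x, ramp ρ (margin f x (hf' x)) ∂DX

/-- 0-1 robust disparity `disp^{rob}_{D_X}(f', f)`. -/
def robDisp (p ε : ℝ) (DX : Measure (Inp d)) (hf' hf : Inp d → Fin C) : ℝ :=
  ∫ x, sSup ((fun x' => ind (hf' x ≠ hf x')) '' ball p ε x) ∂DX

/-- Robust margin disparity `disp^{rob,(ρ)}_{D_X}(f', f)`. -/
def robMarginDisp (p ε ρ : ℝ) (DX : Measure (Inp d)) (hf' : Inp d → Fin C)
    (f : Inp d → Fin C → ℝ) : ℝ :=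
  ∫ x, sSup ((fun x' => ramp ρ (margin f x' (hf' x))) '' ball p ε x) ∂DX

/-- Point-wise local Lipschitz constant `L_f(x, ε)` (w.r.t. the `ℓ_p` ball and `ℓ₁` output norm). -/
def locLip (p ε : ℝ) (f : Inp d → Fin C → ℝ) (x : Inp d) : ℝ :=
  sSup ((fun x' => (∑ c, |f x' c - f x c|) / pnorm p (fun i => x' i - x i)) ''
    {x' | x' ∈ ball p ε x ∧ x' ≠ x})

/-- Topological support of a measure on the input space. -/
def msupport (μ : Measure (Inp d)) : Set (Inp d) :=
  {x | ∀ U : Set (Inp d), IsOpen U → x ∈ U → 0 < μ U}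

/-- Local Lipschitz constant `L_f(D_X, ε)` over the support of `D_X`. -/
def locLipOn (p ε : ℝ) (f : Inp d → Fin C → ℝ) (μ : Measure (Inp d)) : ℝ :=
  sSup (locLip p ε f '' msupport μ)

/-- Robust margin disparity discrepancy `d^{rob,(ρ)}_{f,F}(S_X, T_X)` where `cl` assigns
to each score function its induced classifier. -/
def discrepancy (p ε ρ : ℝ) (F : Set (Inp d → Fin C → ℝ))
    (cl : (Inp d → Fin C → ℝ) → Inp d → Fin C)
    (SX TX : Measure (Inp d)) (f : Inp d → Fin C → ℝ) : ℝ :=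
  sSup ((fun f' => robMarginDisp p ε ρ TX (cl f') f - marginDisp ρ SX (cl f') f) '' F)

/-- The class `Π₁F` of component functions of score functions in `F`. -/
def Pi1 (F : Set (Inp d → Fin C → ℝ)) : Set (Inp d → ℝ) :=
  {g | ∃ f ∈ F, ∃ y : Fin C, g = fun x => f x y}

/-- The class `Π_H F` where `H = {h_f : f ∈ F}` is given by the classifier assignment `cl`. -/
def PiH (F : Set (Inp d → Fin C → ℝ)) (cl : (Inp d → Fin C → ℝ) → Inp d → Fin C) :
    Set (Inp d → ℝ) :=
  {g | ∃ f ∈ F, ∃ f' ∈ F, g = fun x => f x (cl f' x)}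

/-- Rademacher complexity `ℜ_{n,D}(G)` of a class `G` of real functions on `Z`. -/
def rademacher (n : ℕ) {Z : Type*} [MeasurableSpace Z] (D : Measure Z) (G : Set (Z → ℝ)) : ℝ :=
  ∫ z : Fin n → Z, ∫ σ : Fin n → Bool,
      sSup ((fun g => (n : ℝ)⁻¹ * ∑ i, (if σ i then (1 : ℝ) else -1) * g (z i)) '' G)
    ∂(Measure.pi fun _ => (PMF.uniformOfFintype Bool).toMeasure) ∂(Measure.pi fun _ => D)


lemma ramp_nonneg {ρ t : ℝ} (hρ : 0 < ρ) : 0 ≤ ramp ρ t := by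
  unfold ramp
  split_ifs with h1 h2
  · norm_num
  · have : t / ρ ≤ 1 := (div_le_one hρ).2 h2
    linarith
  · exact le_rfl

lemma ramp_le_one {ρ t : ℝ} (hρ : 0 < ρ) : ramp ρ t ≤ 1 := by
  unfold ramp
  split_ifs with h1 h2
  · exact le_rfl
  · have : 0 ≤ t / ρ := div_nonneg (by linarith) hρ.le
    linarith
  · norm_num

lemma ramp_of_nonpos {ρ t : ℝ} (ht : t ≤ 0) : ramp ρ t = 1 := by
  unfold ramp; rw [if_pos ht]

lemma ind_nonneg {P : Prop} : 0 ≤ ind P := by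
  unfold ind; split_ifs <;> norm_num

lemma ind_le_one {P : Prop} : ind P ≤ 1 := by
  unfold ind; split_ifs <;> norm_num

lemma mem_ball_self {d : ℕ} {p ε : ℝ} (hp : 1 ≤ p) (hε : 0 < ε) (x : Inp d) :
    x ∈ ball p ε x := by
  have hp0 : p ≠ 0 := by linarith
  have h0 : pnorm p (fun i => x i - x i) = 0 := by
    unfold pnorm
    rw [one_div]
    simp [sub_self, abs_zero, Real.zero_rpow hp0, Real.zero_rpow (inv_ne_zero hp0)]
  show pnorm p (fun i => x i - x i) ≤ ε
  rw [h0]; exact hε.le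

/-- If the induced classifier disagrees with `y`, the margin is nonpositive. -/
lemma margin_nonpos {d C : ℕ} (f : Inp d → Fin C → ℝ) (hf : Inp d → Fin C)
    (hcl : ∀ x y, f x y ≤ f x (hf x)) (x : Inp d) (y : Fin C) (hne : hf x ≠ y) :
    margin f x y ≤ 0 := by
  unfold margin
  have hmem : f x (hf x) ∈ f x '' {y' | y' ≠ y} := ⟨hf x, hne, rfl⟩
  have hbdd : BddAbove (f x '' {y' | y' ≠ y}) :=
    (Set.toFinite _).bddAbove
  have h1 : f x (hf x) ≤ sSup (f x '' {y' | y' ≠ y}) := le_csSup hbdd hmem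
  have h2 : f x y ≤ f x (hf x) := hcl x y
  linarith

/-- **Proposition 4.7.** For every pair of score functions `f, f*`:
`R^{rob}_T(f) ≤ disp^{rob,(ρ)}_{T_X}(f*, f) + R^{(ρ)}_T(f*)`. -/
theorem robustRisk_le_robMarginDisp_add_marginRisk {d C : ℕ} (hC : 2 ≤ C)
    (ρ ε p : ℝ) (hρ : 0 < ρ) (hε : 0 < ε) (hp : 1 ≤ p)
    (T : Measure (Inp d × Fin C)) [IsProbabilityMeasure T]
    (f fs : Inp d → Fin C → ℝ) (hf hfs : Inp d → Fin C)
    (hcl : ∀ x y, f x y ≤ f x (hf x))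
    (hcls : ∀ x y, fs x y ≤ fs x (hfs x))
    (hint1 : Integrable (fun z => sSup ((fun x' => ind (z.2 ≠ hf x')) '' ball p ε z.1)) T)
    (hint2 : Integrable
      (fun x => sSup ((fun x' => ramp ρ (margin f x' (hfs x))) '' ball p ε x))
      (T.map Prod.fst))
    (hint3 : Integrable (fun z => ramp ρ (margin fs z.1 z.2)) T) :
    robustRisk p ε T hf ≤ robMarginDisp p ε ρ (T.map Prod.fst) hfs f + marginRisk ρ T fs := by
  classical
  set g : Inp d → ℝ :=
    fun x => sSup ((fun x' => ramp ρ (margin f x' (hfs x))) '' ball p ε x) with hg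
  have hgmeas : AEStronglyMeasurable g (T.map Prod.fst) := hint2.aestronglyMeasurable
  have hfstae : AEMeasurable (Prod.fst : Inp d × Fin C → Inp d) T :=
    measurable_fst.aemeasurable
  have hgcomp : Integrable (fun z : Inp d × Fin C => g z.1) T :=
    (integrable_map_measure hgmeas hfstae).mp hint2
  -- pointwise bounds
  have hpt : ∀ z : Inp d × Fin C,
      sSup ((fun x' => ind (z.2 ≠ hf x')) '' ball p ε z.1)
        ≤ g z.1 + ramp ρ (margin fs z.1 z.2) := by
    intro z
    obtain ⟨x, y⟩ := z
    have hxball : x ∈ ball p ε x := mem_ball_self hp hε x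
    have hS2ne : ((fun x' => ramp ρ (margin f x' (hfs x))) '' ball p ε x).Nonempty :=
      ⟨_, Set.mem_image_of_mem _ hxball⟩
    have hS2bdd : BddAbove ((fun x' => ramp ρ (margin f x' (hfs x))) '' ball p ε x) := by
      refine ⟨1, ?_⟩
      rintro _ ⟨x', -, rfl⟩
      exact ramp_le_one hρ
    have hS2nonneg : 0 ≤ g x := by
      refine le_trans (ramp_nonneg hρ) (le_csSup hS2bdd (Set.mem_image_of_mem _ hxball))
    have hramp0 : 0 ≤ ramp ρ (margin fs x y) := ramp_nonneg hρ
    by_cases hcase : hfs x = y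
    · -- reduce to sSup S1 ≤ g x
      have : sSup ((fun x' => ind (y ≠ hf x')) '' ball p ε x) ≤ g x := by
        refine Real.sSup_le ?_ hS2nonneg
        rintro _ ⟨x', hx', rfl⟩
        show ind (y ≠ hf x') ≤ g x
        by_cases hy : y = hf x'
        · have h0 : ind (y ≠ hf x') = 0 := by simp [ind, hy]
          rw [h0]; exact hS2nonneg
        · have h1 : ind (y ≠ hf x') = 1 := by simp [ind, hy]
          have hm : margin f x' (hfs x) ≤ 0 := by
            refine margin_nonpos f hf hcl x' (hfs x) ?_
            rw [hcase]
            exact fun h => hy h.symm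
          have h2 : ramp ρ (margin f x' (hfs x)) = 1 := ramp_of_nonpos hm
          rw [h1, ← h2]
          exact le_csSup hS2bdd (Set.mem_image_of_mem _ hx')
      linarith
    · have hm : margin fs x y ≤ 0 := margin_nonpos fs hfs hcls x y hcase
      have h2 : ramp ρ (margin fs x y) = 1 := ramp_of_nonpos hm
      have h1 : sSup ((fun x' => ind (y ≠ hf x')) '' ball p ε x) ≤ 1 := by
        refine Real.sSup_le ?_ (by norm_num)
        rintro _ ⟨x', -, rfl⟩
        exact ind_le_one
      rw [h2]
      linarith
  have hmono : robustRisk p ε T hf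
      ≤ ∫ z, (g z.1 + ramp ρ (margin fs z.1 z.2)) ∂T := by
    exact integral_mono hint1 (hgcomp.add hint3) hpt
  have hsplit : ∫ z, (g z.1 + ramp ρ (margin fs z.1 z.2)) ∂T
      = (∫ z, g z.1 ∂T) + ∫ z, ramp ρ (margin fs z.1 z.2) ∂T :=
    integral_add hgcomp hint3
  have hmap : ∫ z, g z.1 ∂T = robMarginDisp p ε ρ (T.map Prod.fst) hfs f := by
    rw [robMarginDisp, ← hg, integral_map hfstae hgmeas]
  calc robustRisk p ε T hf ≤ _ := hmono
    _ = _ := hsplit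
    _ = _ := by rw [hmap]; rfl


end RobustUDA
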